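/- arXiv:1506.02538 — 2 statements merged into one kernel-verified Lean document; each statement's English description precedes it below -/
import Mathlib

section
/- Let R be a complete local Noetherian ring, M a finitely generated torsion-free module over the Iwasawa algebra Λ = ℤ_p[[T]] such that multiplication by p is injective on M/TM. Then M is a free Λ-module. (More precisely: if M is Λ-torsion-free and M/TM has no p-torsion, and M is finitely generated over Λ, then M is free over Λ.) -/
open PowerSeries Submodule

section
variable (p : ℕ) [Fact p.Prime]

lemma myker : RingHom.ker (constantCoeff (R := ℤ_[p])) = Ideal.span {(X : PowerSeries ℤ_[p])} := by
  ext φ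
  rw [RingHom.mem_ker, Ideal.mem_span_singleton, X_dvd_iff]

noncomputable def myequiv :
    (PowerSeries ℤ_[p] ⧸ Ideal.span {(X : PowerSeries ℤ_[p])}) ≃+* ℤ_[p] :=
  (Ideal.quotEquivOfEq (myker p).symm).trans
    (RingHom.quotientKerEquivOfSurjective (f := constantCoeff (R := ℤ_[p]))
      (fun a => ⟨PowerSeries.C (R := ℤ_[p]) a, constantCoeff_C a⟩))

instance : IsDomain (PowerSeries ℤ_[p] ⧸ Ideal.span {(X : PowerSeries ℤ_[p])}) :=
  letI := span_X_isPrime (R := ℤ_[p])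
  Ideal.Quotient.isDomain _

instance : IsPrincipalIdealRing (PowerSeries ℤ_[p] ⧸ Ideal.span {(X : PowerSeries ℤ_[p])}) :=
  IsPrincipalIdealRing.of_surjective (myequiv p).symm.toRingHom (myequiv p).symm.surjective

lemma myjac : Ideal.span {(X : PowerSeries ℤ_[p])} ≤ Ideal.jacobson ⊥ := by
  rw [Ideal.span_le, Set.singleton_subset_iff, SetLike.mem_coe, Ideal.mem_jacobson_bot]
  intro y
  rw [isUnit_iff_constantCoeff]
  simp

variable (M : Type*) [AddCommGroup M] [Module (PowerSeries ℤ_[p]) M]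

local notation "Λp" => PowerSeries ℤ_[p]
local notation "Ip" => (Ideal.span {(X : PowerSeries ℤ_[p])} : Ideal (PowerSeries ℤ_[p]))
local notation "Qp" => M ⧸ (Ideal.span {(X : PowerSeries ℤ_[p])} •
        (⊤ : Submodule (PowerSeries ℤ_[p]) M))

lemma mysmul (f : Λp) (q : Qp) :
    (Ideal.Quotient.mk Ip f) • q = f • q := by
  obtain ⟨x, rfl⟩ := Submodule.Quotient.mk_surjective _ q
  rfl

lemma mymkzero (f : Λp) :
    Ideal.Quotient.mk Ip f = 0 ↔ constantCoeff (R := ℤ_[p]) f = 0 := by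
  rw [Ideal.Quotient.eq_zero_iff_mem, Ideal.mem_span_singleton, X_dvd_iff]

lemma mynzsd
    (hinj : Function.Injective fun x : Qp => ((p : Λp)) • x) :
    NoZeroSMulDivisors (Λp ⧸ Ip) Qp := by
  have hp : ∀ q : Qp, (p : Λp) • q = 0 → q = 0 := by
    intro q h
    apply hinj
    show (p : Λp) • q = (p : Λp) • (0 : Qp)
    rw [h, smul_zero]
  have hpn : ∀ (n : ℕ) (q : Qp), ((p : Λp)) ^ n • q = 0 → q = 0 := by
    intro n
    induction n with
    | zero => intro q h; simpa using h
    | succ n ih =>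
      intro q h
      refine ih _ (hp _ ?_)
      rw [← mul_smul, ← pow_succ']
      exact h
  constructor
  intro c q h
  obtain ⟨f, rfl⟩ := Ideal.Quotient.mk_surjective c
  by_cases hf : constantCoeff (R := ℤ_[p]) f = 0
  · exact Or.inl ((mymkzero p f).mpr hf)
  · right
    -- f • q = (C (constantCoeff f)) • q since f - C(...) ∈ I
    have hCq : (PowerSeries.C (R := ℤ_[p]) (constantCoeff (R := ℤ_[p]) f)) • q = 0 := by
      have : Ideal.Quotient.mk Ip f =
          Ideal.Quotient.mk Ip (PowerSeries.C (R := ℤ_[p]) (constantCoeff (R := ℤ_[p]) f)) := by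
        rw [Ideal.Quotient.mk_eq_mk_iff_sub_mem, Ideal.mem_span_singleton, X_dvd_iff]
        simp
      rw [mysmul] at h
      rw [← mysmul, ← this, mysmul]
      exact h
    -- write constantCoeff f = u * p ^ n
    set a := constantCoeff (R := ℤ_[p]) f with ha
    have hspec := PadicInt.unitCoeff_spec hf
    rw [hspec] at hCq
    rw [map_mul, mul_smul] at hCq
    have hu : IsUnit (PowerSeries.C (R := ℤ_[p]) (PadicInt.unitCoeff hf : ℤ_[p])) :=
      (PadicInt.unitCoeff hf).isUnit.map (PowerSeries.C (R := ℤ_[p]))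
    obtain ⟨u, hu'⟩ := hu
    have h2 : (PowerSeries.C (R := ℤ_[p]) ((p : ℤ_[p]) ^ (a.valuation))) • q = 0 := by
      calc (PowerSeries.C (R := ℤ_[p]) ((p : ℤ_[p]) ^ (a.valuation))) • q
          = ((↑u⁻¹ * ↑u : Λp)) • ((PowerSeries.C (R := ℤ_[p]) ((p : ℤ_[p]) ^ (a.valuation))) • q) := by
            rw [Units.inv_mul, one_smul]
        _ = (↑u⁻¹ : Λp) • ((PowerSeries.C (R := ℤ_[p]) (PadicInt.unitCoeff hf : ℤ_[p])) • ((PowerSeries.C (R := ℤ_[p]) ((p : ℤ_[p]) ^ (a.valuation))) • q)) := by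
            rw [mul_smul, hu']
        _ = 0 := by rw [hCq, smul_zero]
    have h3 : ((p : Λp)) ^ (a.valuation) • q = 0 := by
      rw [map_pow] at h2
      have : (PowerSeries.C (R := ℤ_[p]) (p : ℤ_[p])) = ((p : Λp)) := by
        simp
      rwa [this] at h2
    exact hpn _ _ h3

end

/-- Let `Λ = ℤ_p[[T]]` and let `M` be a finitely generated `Λ`-module which is
`Λ`-torsion-free and such that multiplication by `p` is injective on `M/TM`.
Then `M` is a free `Λ`-module. -/
theorem free_of_torsionFree_of_p_injective (p : ℕ) [Fact p.Prime]
    (M : Type*) [AddCommGroup M] [Module (PowerSeries ℤ_[p]) M]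
    [Module.Finite (PowerSeries ℤ_[p]) M]
    [NoZeroSMulDivisors (PowerSeries ℤ_[p]) M]
    (hinj : Function.Injective fun x : M ⧸ (Ideal.span {(PowerSeries.X : PowerSeries ℤ_[p])} •
        (⊤ : Submodule (PowerSeries ℤ_[p]) M)) => ((p : PowerSeries ℤ_[p])) • x) :
    Module.Free (PowerSeries ℤ_[p]) M := by
  classical
  haveI := mynzsd p M hinj
  obtain ⟨S, hS⟩ : (⊤ : Submodule (PowerSeries ℤ_[p]) M).FG := Module.Finite.fg_top
  -- the images of S span the quotient over R' = Λ/(X)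
  have hQspan : span (PowerSeries ℤ_[p] ⧸ Ideal.span {(X : PowerSeries ℤ_[p])})
      (Set.range fun x : S => (Submodule.Quotient.mk x.1 :
        M ⧸ (Ideal.span {(X : PowerSeries ℤ_[p])} • (⊤ : Submodule (PowerSeries ℤ_[p]) M)))) = ⊤ := by
    rw [eq_top_iff]
    rintro q -
    obtain ⟨x, rfl⟩ := Submodule.Quotient.mk_surjective _ q
    have hx : x ∈ span (PowerSeries ℤ_[p]) (S : Set M) := by rw [hS]; trivial
    induction hx using span_induction with
    | mem y hy =>
        exact subset_span ⟨⟨y, hy⟩, rfl⟩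
    | zero => rw [Submodule.Quotient.mk_zero]; exact zero_mem _
    | add y z _ _ hy hz => rw [Submodule.Quotient.mk_add]; exact add_mem hy hz
    | smul f y _ hy =>
        rw [Submodule.Quotient.mk_smul, ← mysmul p M f]
        exact smul_mem _ _ hy
  obtain ⟨n, b⟩ := Module.basisOfFiniteTypeTorsionFree
    (R := PowerSeries ℤ_[p] ⧸ Ideal.span {(X : PowerSeries ℤ_[p])}) hQspan
  choose m hm using fun i => Submodule.Quotient.mk_surjective _ (b i)
  set N : Submodule (PowerSeries ℤ_[p]) M := span (PowerSeries ℤ_[p]) (Set.range m) with hN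
  -- key decomposition
  have key : ∀ x : M, x ∈ N ⊔ (Ideal.span {(X : PowerSeries ℤ_[p])} • ⊤) := by
    intro x
    choose f hf using fun i =>
      Ideal.Quotient.mk_surjective (I := Ideal.span {(X : PowerSeries ℤ_[p])})
        (b.repr (Submodule.Quotient.mk x) i)
    have hsum : x - ∑ i, f i • m i ∈
        (Ideal.span {(X : PowerSeries ℤ_[p])} • (⊤ : Submodule (PowerSeries ℤ_[p]) M)) := by
      rw [← Submodule.Quotient.eq]
      have : (Submodule.Quotient.mk (∑ i, f i • m i) :
          M ⧸ (Ideal.span {(X : PowerSeries ℤ_[p])} • (⊤ : Submodule (PowerSeries ℤ_[p]) M)))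
          = ∑ i, (b.repr (Submodule.Quotient.mk x) i) • b i := by
        rw [← Submodule.mkQ_apply, map_sum]
        refine Finset.sum_congr rfl fun i _ => ?_
        rw [Submodule.mkQ_apply, Submodule.Quotient.mk_smul, ← mysmul p M, hf, hm]
      rw [this, b.sum_repr]
    have hx : x = (∑ i, f i • m i) + (x - ∑ i, f i • m i) := by abel
    rw [hx]
    refine add_mem_sup (sum_mem fun i _ => smul_mem _ _ (subset_span ⟨i, rfl⟩)) hsum
  -- Nakayama: N = ⊤
  have hNtop : N = ⊤ := by
    have h1 : (⊤ : Submodule (PowerSeries ℤ_[p]) (M ⧸ N)) ≤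
        Ideal.span {(X : PowerSeries ℤ_[p])} • ⊤ := by
      rintro z -
      obtain ⟨x, rfl⟩ := N.mkQ_surjective z
      obtain ⟨y, hy, t, ht, hyt⟩ := mem_sup.mp (key x)
      have hy0 : N.mkQ y = 0 := (Submodule.Quotient.mk_eq_zero N).mpr hy
      have : N.mkQ x = N.mkQ t := by
        rw [← hyt, map_add, hy0, zero_add]
      rw [this]
      have h2 : N.mkQ t ∈ Submodule.map N.mkQ
          (Ideal.span {(X : PowerSeries ℤ_[p])} • ⊤) := Submodule.mem_map_of_mem ht
      rw [Submodule.map_smul''] at h2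
      exact Submodule.smul_mono le_rfl le_top h2
    have h2 := Submodule.eq_bot_of_le_smul_of_le_jacobson_bot
      (Ideal.span {(X : PowerSeries ℤ_[p])}) ⊤ Module.Finite.fg_top h1 (myjac p)
    have : Subsingleton (M ⧸ N) := by
      constructor
      intro a c
      have ha : a ∈ (⊥ : Submodule (PowerSeries ℤ_[p]) (M ⧸ N)) := h2 ▸ mem_top
      have hc : c ∈ (⊥ : Submodule (PowerSeries ℤ_[p]) (M ⧸ N)) := h2 ▸ mem_top
      rw [mem_bot] at ha hc
      rw [ha, hc]
    exact Submodule.Quotient.subsingleton_iff.mp this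
  -- linear independence of m
  have step : ∀ g : Fin n → PowerSeries ℤ_[p], (∑ i, g i • m i) = 0 →
      (∀ i, constantCoeff (R := ℤ_[p]) (g i) = 0) ∧
      ∃ g' : Fin n → PowerSeries ℤ_[p], (∀ i, g i = X * g' i) ∧ (∑ i, g' i • m i) = 0 := by
    intro g hg
    have hmk : ∀ i, Ideal.Quotient.mk (Ideal.span {(X : PowerSeries ℤ_[p])}) (g i) = 0 := by
      have h0 : ∑ i, (Ideal.Quotient.mk (Ideal.span {(X : PowerSeries ℤ_[p])}) (g i)) • b i = 0 := by
        have : ∑ i, (Ideal.Quotient.mk (Ideal.span {(X : PowerSeries ℤ_[p])}) (g i)) • b i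
            = Submodule.Quotient.mk (∑ i, g i • m i) := by
          rw [← Submodule.mkQ_apply, map_sum]
          refine Finset.sum_congr rfl fun i _ => ?_
          rw [Submodule.mkQ_apply, Submodule.Quotient.mk_smul, ← mysmul p M, hm]
        rw [this, hg, Submodule.Quotient.mk_zero]
      exact Fintype.linearIndependent_iff.mp b.linearIndependent _ h0
    have hdvd : ∀ i, ∃ g', g i = X * g' := by
      intro i
      have := (mymkzero p (g i)).mp (hmk i)
      exact X_dvd_iff.mpr this
    choose g' hg' using hdvd
    refine ⟨fun i => by rw [← mymkzero p]; exact hmk i, g', hg', ?_⟩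
    have hXs : (X : PowerSeries ℤ_[p]) • (∑ i, g' i • m i) = 0 := by
      rw [Finset.smul_sum]
      rw [← hg]
      refine Finset.sum_congr rfl fun i _ => ?_
      rw [← mul_smul, ← hg' i]
    rcases smul_eq_zero.mp hXs with h | h
    · exact absurd h X_ne_zero
    · exact h
  have hcoeff : ∀ (k : ℕ) (g : Fin n → PowerSeries ℤ_[p]), (∑ i, g i • m i) = 0 →
      ∀ i, (coeff (R := ℤ_[p]) k) (g i) = 0 := by
    intro k
    induction k with
    | zero =>
        intro g hg i
        rw [coeff_zero_eq_constantCoeff_apply]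
        exact (step g hg).1 i
    | succ k ih =>
        intro g hg i
        obtain ⟨-, g', hg', hrel⟩ := step g hg
        rw [hg' i, coeff_succ_X_mul]
        exact ih g' hrel i
  have hli : LinearIndependent (PowerSeries ℤ_[p]) m := by
    rw [Fintype.linearIndependent_iff]
    intro g hg i
    ext k
    rw [map_zero]
    exact hcoeff k g hg i
  exact Module.Free.of_basis (Module.Basis.mk hli (le_of_eq hNtop.symm))
end

section
/- Let Λ = ℤ_p[[T]] and let X be a finitely generated Λ-module whose Pontryagin-dual-type embedding X ↪ Λ has cokernel M of finite cardinality. Let Λ⁺_{n,n'} = Λ/(ω⁺_n, p^{n'}) where ω⁺_n is a distinguished polynomial of degree d_n. Then the ratio #(X ⊗_Λ Λ⁺_{n,n'}) / #(Λ⁺_{n,n'}) is a power of p bounded independently of n and n'. -/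
/-- A distinguished polynomial over `ℤ_p`: monic, with all non-leading coefficients
divisible by `p`. -/
def IsDistinguished (p : ℕ) [Fact p.Prime] (f : Polynomial ℤ_[p]) : Prop :=
  f.Monic ∧ ∀ i < f.natDegree, f.coeff i ∈ Ideal.span {(p : ℤ_[p])}

open PowerSeries

section helpers

lemma finite_of_finite_quot' {R M : Type*} [Ring R] [AddCommGroup M] [Module R M]
    (N : Submodule R M) (h1 : Finite N) (h2 : Finite (M ⧸ N)) : Finite M := by
  haveI : Finite (M ⧸ N.toAddSubgroup) := h2
  haveI : Finite N.toAddSubgroup := h1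
  exact Finite.of_equiv _
    (AddSubgroup.addGroupEquivQuotientProdAddSubgroup (s := N.toAddSubgroup)).symm

lemma card_quot_mul {R M : Type*} [Ring R] [AddCommGroup M] [Module R M]
    (N : Submodule R M) : Nat.card M = Nat.card (M ⧸ N) * Nat.card N :=
  AddSubgroup.card_eq_card_quotient_mul_card_addSubgroup N.toAddSubgroup

lemma exists_card_eq_pow (p : ℕ) [Fact p.Prime] (G : Type*) [AddCommGroup G]
    [Module ℤ_[p] G] [Finite G] : ∃ s : ℕ, Nat.card G = p ^ s := by
  refine ⟨_, Nat.eq_prime_pow_of_unique_prime_dvd Nat.card_pos.ne' ?_⟩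
  intro q hq hdvd
  by_contra hqp
  haveI : Fact q.Prime := ⟨hq⟩
  obtain ⟨x, hx⟩ := exists_prime_addOrderOf_dvd_card' (G := G) q hdvd
  have hqx : q • x = 0 := hx ▸ addOrderOf_nsmul_eq_zero x
  have hnd : ¬ ((p : ℤ) ∣ (q : ℤ)) := by
    rw [Int.natCast_dvd_natCast]
    intro h
    exact hqp ((Nat.prime_dvd_prime_iff_eq (Fact.out) hq).mp h).symm
  have hnorm : ‖((q : ℤ) : ℤ_[p])‖ = 1 :=
    le_antisymm (PadicInt.norm_le_one _)
      (not_lt.mp (fun h => hnd ((PadicInt.norm_int_lt_one_iff_dvd _).mp h)))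
  have hu : IsUnit ((q : ℕ) : ℤ_[p]) := by
    rw [show ((q : ℕ) : ℤ_[p]) = ((q : ℤ) : ℤ_[p]) by push_cast; ring]
    exact PadicInt.isUnit_iff.mpr hnorm
  obtain ⟨u, hu'⟩ := hu
  have hx0 : x = 0 := by
    have h1 : ((q : ℤ_[p])) • x = 0 := by rw [Nat.cast_smul_eq_nsmul, hqx]
    calc x = ((u⁻¹ : ℤ_[p]ˣ) : ℤ_[p]) • (((u : ℤ_[p])) • x) := by
              rw [smul_smul]
              norm_num
    _ = 0 := by rw [hu', h1, smul_zero]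
  rw [hx0, addOrderOf_zero] at hx
  exact hq.one_lt.ne hx

lemma exists_card_eq_pow' (p : ℕ) [Fact p.Prime] (G : Type*) [AddCommGroup G]
    [Module (PowerSeries ℤ_[p]) G] [Finite G] : ∃ s : ℕ, Nat.card G = p ^ s := by
  letI : Module ℤ_[p] G := Module.compHom G (algebraMap ℤ_[p] (PowerSeries ℤ_[p]))
  exact exists_card_eq_pow p G

lemma finite_quot_span (p : ℕ) [Fact p.Prime] (n' m : ℕ) :
    Finite (PowerSeries ℤ_[p] ⧸ (Ideal.span {(p : PowerSeries ℤ_[p]) ^ n',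
      (PowerSeries.X : PowerSeries ℤ_[p]) ^ m})) := by
  set J : Ideal (PowerSeries ℤ_[p]) :=
    Ideal.span {(p : PowerSeries ℤ_[p]) ^ n', (PowerSeries.X : PowerSeries ℤ_[p]) ^ m} with hJ
  let φ : PowerSeries ℤ_[p] →+ (Fin m → ZMod (p ^ n')) :=
    { toFun := fun f i => PadicInt.toZModPow n' ((PowerSeries.coeff (R := ℤ_[p]) i) f)
      map_zero' := by ext i; simp
      map_add' := by intro f g; ext i; simp }
  have hpn : ∀ (a : PowerSeries ℤ_[p]), a * (p : PowerSeries ℤ_[p]) ^ n'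
      = ((p : ℤ_[p]) ^ n') • a := by
    intro a
    rw [PowerSeries.smul_eq_C_mul, map_pow, map_natCast]
    ring
  have hker : ∀ x ∈ J, φ x = 0 := by
    intro x hx
    rw [hJ, Ideal.mem_span_pair] at hx
    obtain ⟨a, b, rfl⟩ := hx
    ext i
    have h1 : (coeff (R := ℤ_[p]) i) (a * (p : PowerSeries ℤ_[p]) ^ n')
        = (p : ℤ_[p]) ^ n' * (coeff (R := ℤ_[p]) i) a := by
      rw [hpn, map_smul, smul_eq_mul]
    have hdvd : (X : PowerSeries ℤ_[p]) ^ m ∣ b * X ^ m := dvd_mul_left _ _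
    have h3 : (coeff (R := ℤ_[p]) i) (b * X ^ m) = 0 := (PowerSeries.X_pow_dvd_iff.mp hdvd) i i.isLt
    have h4 : ((p : ℤ_[p]) ^ n' * (coeff (R := ℤ_[p]) i) a)
        ∈ RingHom.ker (PadicInt.toZModPow (p := p) n') := by
      rw [PadicInt.ker_toZModPow]
      exact Ideal.mul_mem_right _ _ (Ideal.subset_span rfl)
    rw [RingHom.mem_ker] at h4
    simp [φ, h1, h3, h4]
  have hker' : ∀ x ∈ J.toAddSubgroup, φ x = 0 := hker
  let F := QuotientAddGroup.lift J.toAddSubgroup φ hker'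
  refine Finite.of_injective F ?_
  refine (injective_iff_map_eq_zero F).mpr ?_
  intro x
  induction x using QuotientAddGroup.induction_on with
  | H f =>
  intro hf
  have hφf : φ f = 0 := by exact hf
  have hc : ∀ i : ℕ, i < m → ∃ c : ℤ_[p], (coeff (R := ℤ_[p]) i) f = (p : ℤ_[p]) ^ n' * c := by
    intro i him
    have h0 : φ f ⟨i, him⟩ = 0 := by rw [hφf]; rfl
    have hmem : (coeff (R := ℤ_[p]) i) f ∈ RingHom.ker (PadicInt.toZModPow (p := p) n') := h0
    rw [PadicInt.ker_toZModPow, Ideal.mem_span_singleton] at hmem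
    obtain ⟨c, hc⟩ := hmem
    exact ⟨c, hc⟩
  let c : PowerSeries ℤ_[p] := PowerSeries.mk fun i => if h : i < m then (hc i h).choose else 0
  have hXdvd : (X : PowerSeries ℤ_[p]) ^ m ∣ f - (p : PowerSeries ℤ_[p]) ^ n' * c := by
    rw [PowerSeries.X_pow_dvd_iff]
    intro i him
    have hcoef : (coeff (R := ℤ_[p]) i) ((p : PowerSeries ℤ_[p]) ^ n' * c)
        = (p : ℤ_[p]) ^ n' * (coeff (R := ℤ_[p]) i) c := by
      rw [mul_comm, hpn, map_smul, smul_eq_mul]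
    have hci : (coeff (R := ℤ_[p]) i) c = (hc i him).choose := by
      simp [c, PowerSeries.coeff_mk, him]
    rw [map_sub, hcoef, hci, ← (hc i him).choose_spec, sub_self]
  obtain ⟨e, he⟩ := hXdvd
  have hmem : f ∈ J := by
    rw [hJ, Ideal.mem_span_pair]
    exact ⟨c, e, by linear_combination -he⟩
  exact (QuotientAddGroup.eq_zero_iff f).mpr hmem

lemma eq_p_mul (p : ℕ) [Fact p.Prime] (g : PowerSeries ℤ_[p])
    (hg : ∀ i, (p : ℤ_[p]) ∣ (PowerSeries.coeff (R := ℤ_[p]) i) g) :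
    ∃ h, g = (p : PowerSeries ℤ_[p]) * h := by
  refine ⟨PowerSeries.mk fun i => (hg i).choose, ?_⟩
  ext i
  rw [show (p : PowerSeries ℤ_[p]) = PowerSeries.C (R := ℤ_[p]) (p : ℤ_[p]) from (map_natCast _ p).symm,
    PowerSeries.coeff_C_mul, PowerSeries.coeff_mk]
  exact (hg i).choose_spec

lemma X_pow_mem (p : ℕ) [Fact p.Prime] (ω : Polynomial ℤ_[p]) (hω : IsDistinguished p ω)
    (n' : ℕ) : (PowerSeries.X : PowerSeries ℤ_[p]) ^ (ω.natDegree * n')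
      ∈ Ideal.span {((ω : PowerSeries ℤ_[p])), (p : PowerSeries ℤ_[p]) ^ n'} := by
  set d := ω.natDegree
  set I := Ideal.span {((ω : PowerSeries ℤ_[p])), (p : PowerSeries ℤ_[p]) ^ n'} with hI
  have hcoe : ∀ i, (p : ℤ_[p]) ∣ (PowerSeries.coeff (R := ℤ_[p]) i) ((ω : PowerSeries ℤ_[p]) - X ^ d) := by
    intro i
    rw [map_sub, Polynomial.coeff_coe, PowerSeries.coeff_X_pow]
    rcases lt_trichotomy i d with hlt | rfl | hgt
    · rw [if_neg hlt.ne]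
      simpa using Ideal.mem_span_singleton.mp (hω.2 i hlt)
    · rw [if_pos rfl, hω.1.coeff_natDegree]
      simp
    · rw [if_neg hgt.ne', Polynomial.coeff_eq_zero_of_natDegree_lt hgt]
      simp
  obtain ⟨h, hh⟩ := eq_p_mul p ((ω : PowerSeries ℤ_[p]) - X ^ d) hcoe
  rw [← Ideal.Quotient.eq_zero_iff_mem]
  set q := Ideal.Quotient.mk I
  have h1 : q ((ω : PowerSeries ℤ_[p])) = 0 :=
    Ideal.Quotient.eq_zero_iff_mem.mpr (Ideal.subset_span (by simp))
  have h2 : q ((p : PowerSeries ℤ_[p]) ^ n') = 0 :=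
    Ideal.Quotient.eq_zero_iff_mem.mpr (Ideal.subset_span (by simp))
  have hXd : q X ^ d = -(q (p : PowerSeries ℤ_[p]) * q h) := by
    have hXe : (X : PowerSeries ℤ_[p]) ^ d
        = (ω : PowerSeries ℤ_[p]) - (p : PowerSeries ℤ_[p]) * h := by
      rw [← hh]; ring
    rw [← map_pow, hXe, map_sub, h1, map_mul, zero_sub]
  rw [map_pow, pow_mul, hXd]
  calc (-(q (p : PowerSeries ℤ_[p]) * q h)) ^ n'
      = (-1) ^ n' * (q ((p : PowerSeries ℤ_[p]) ^ n') * q h ^ n') := by rw [map_pow]; ring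
  _ = 0 := by rw [h2]; ring

end helpers

set_option maxHeartbeats 4000000

/-- Let `Λ = ℤ_p[[T]]` and `X` a finitely generated `Λ`-module embedding in `Λ` with
finite cokernel `M`.  For distinguished polynomials `ω⁺_n` and `Λ⁺_{n,n'} = Λ/(ω⁺_n, p^{n'})`,
the ratio `#(X ⊗_Λ Λ⁺_{n,n'}) / #(Λ⁺_{n,n'})` is a power of `p` bounded independently of
`n` and `n'`. -/
theorem card_ratio_bounded (p : ℕ) [Fact p.Prime]
    (X : Type*) [AddCommGroup X] [Module (PowerSeries ℤ_[p]) X]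
    [Module.Finite (PowerSeries ℤ_[p]) X]
    (ι : X →ₗ[PowerSeries ℤ_[p]] PowerSeries ℤ_[p]) (hι : Function.Injective ι)
    (hcoker : Finite (PowerSeries ℤ_[p] ⧸ LinearMap.range ι))
    (ω : ℕ → Polynomial ℤ_[p]) (hω : ∀ n, IsDistinguished p (ω n)) :
    ∃ C : ℕ, ∀ n n' : ℕ, ∃ j : ℤ, j.natAbs ≤ C ∧
      (Nat.card (X ⧸ (Ideal.span {((ω n : PowerSeries ℤ_[p])), (p : PowerSeries ℤ_[p]) ^ n'} •
          (⊤ : Submodule (PowerSeries ℤ_[p]) X))) : ℚ) =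
        (p : ℚ) ^ j * (Nat.card (PowerSeries ℤ_[p] ⧸
          Ideal.span {((ω n : PowerSeries ℤ_[p])), (p : PowerSeries ℤ_[p]) ^ n'}) : ℚ) := by
  classical
  have hp1 : 1 < p := (Fact.out : p.Prime).one_lt
  set Y : Submodule (PowerSeries ℤ_[p]) (PowerSeries ℤ_[p]) := LinearMap.range ι with hY
  haveI : Finite (PowerSeries ℤ_[p] ⧸ Y) := hcoker
  set mM : ℕ := Nat.card (PowerSeries ℤ_[p] ⧸ Y) with hmM
  have hmM1 : 1 ≤ mM := Nat.card_pos
  refine ⟨mM * mM, ?_⟩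
  intro n n'
  set ωn : PowerSeries ℤ_[p] := ((ω n : Polynomial ℤ_[p]) : PowerSeries ℤ_[p]) with hωn
  set π : PowerSeries ℤ_[p] := (p : PowerSeries ℤ_[p]) ^ n' with hπ
  set I : Ideal (PowerSeries ℤ_[p]) := Ideal.span {ωn, π} with hI
  have hωnI : ωn ∈ I := Ideal.subset_span (Set.mem_insert _ _)
  have hπI : π ∈ I := Ideal.subset_span (Set.mem_insert_of_mem _ rfl)
  -- Finiteness of Λ/I
  haveI hfinI : Finite (PowerSeries ℤ_[p] ⧸ I) := by
    have hJI : (Ideal.span {(p : PowerSeries ℤ_[p]) ^ n',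
        (PowerSeries.X : PowerSeries ℤ_[p]) ^ ((ω n).natDegree * n')}
          : Submodule (PowerSeries ℤ_[p]) (PowerSeries ℤ_[p]))
        ≤ Submodule.comap (LinearMap.id) (I : Submodule (PowerSeries ℤ_[p]) (PowerSeries ℤ_[p])) := by
      rw [Ideal.span_le]
      rintro x hx
      rcases hx with h | h
      · rw [h]
        exact hπI
      · rw [Set.mem_singleton_iff] at h
        rw [h, hI]
        exact X_pow_mem p (ω n) (hω n) n'
    haveI := finite_quot_span p n' ((ω n).natDegree * n')
    refine Finite.of_surjective (Submodule.mapQ _ _ LinearMap.id hJI) ?_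
    intro z
    obtain ⟨y, rfl⟩ := Submodule.Quotient.mk_surjective _ z
    exact ⟨Submodule.Quotient.mk y, by rw [Submodule.mapQ_apply]; rfl⟩
  -- the induced map ψ
  have hIle : I • (⊤ : Submodule (PowerSeries ℤ_[p]) X)
      ≤ Submodule.comap ι (I : Submodule (PowerSeries ℤ_[p]) (PowerSeries ℤ_[p])) := by
    intro x hx
    refine Submodule.smul_induction_on hx ?_ ?_
    · intro r hr m _
      simp only [Submodule.mem_comap, map_smul, smul_eq_mul]
      exact Ideal.mul_mem_right _ _ hr
    · intro a b ha hb
      simp only [Submodule.mem_comap, map_add] at *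
      exact Submodule.add_mem _ ha hb
  set ψ : (X ⧸ I • (⊤ : Submodule (PowerSeries ℤ_[p]) X))
      →ₗ[PowerSeries ℤ_[p]] (PowerSeries ℤ_[p] ⧸ I) := Submodule.mapQ _ _ ι hIle with hψ
  have hrange : LinearMap.range ψ = Y.map I.mkQ := by
    ext z
    constructor
    · rintro ⟨w, rfl⟩
      obtain ⟨x, rfl⟩ := Submodule.Quotient.mk_surjective _ w
      exact ⟨ι x, ⟨x, rfl⟩, by rw [hψ, Submodule.mapQ_apply]; rfl⟩
    · rintro ⟨_, ⟨x, rfl⟩, rfl⟩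
      exact ⟨Submodule.Quotient.mk x, by rw [hψ, Submodule.mapQ_apply]; rfl⟩
  -- the auxiliary map g bounding the kernel of ψ
  set f : (PowerSeries ℤ_[p] × PowerSeries ℤ_[p]) →ₗ[PowerSeries ℤ_[p]] PowerSeries ℤ_[p] :=
    ωn • LinearMap.fst _ _ _ + π • LinearMap.snd _ _ _ with hf
  have hfab : ∀ a b : PowerSeries ℤ_[p], f (a, b) = ωn * a + π * b := by
    intro a b
    simp [hf, smul_eq_mul]
  set K : Submodule (PowerSeries ℤ_[p]) (PowerSeries ℤ_[p] × PowerSeries ℤ_[p]) :=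
    Submodule.comap f Y with hK
  have hfY : ∀ c : K, f (c : PowerSeries ℤ_[p] × PowerSeries ℤ_[p]) ∈ Y := fun c => c.2
  set fY : K →ₗ[PowerSeries ℤ_[p]] Y :=
    LinearMap.codRestrict Y (f.comp K.subtype) hfY with hfYd
  set e' := LinearEquiv.ofInjective ι hι
  set g : K →ₗ[PowerSeries ℤ_[p]] (X ⧸ I • (⊤ : Submodule (PowerSeries ℤ_[p]) X)) :=
    (I • (⊤ : Submodule (PowerSeries ℤ_[p]) X)).mkQ.comp
      ((e'.symm : Y →ₗ[PowerSeries ℤ_[p]] X).comp fY) with hg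
  have hesymm : ∀ (x : X) (w : Y), (w : PowerSeries ℤ_[p]) = ι x → e'.symm w = x := by
    intro x w hw
    rw [LinearEquiv.symm_apply_eq]
    apply Subtype.ext
    rw [LinearEquiv.ofInjective_apply]
    exact hw
  set K₀ : Submodule (PowerSeries ℤ_[p]) K := Submodule.comap K.subtype (Y.prod Y) with hK₀d
  have hK₀ : K₀ ≤ LinearMap.ker g := by
    rintro ⟨⟨a, b⟩, hab⟩ hc
    obtain ⟨hc1, hc2⟩ := hc
    obtain ⟨u, hu⟩ := hc1
    obtain ⟨v, hv⟩ := hc2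
    have hval : f (a, b) = ι (ωn • u + π • v) := by
      rw [hfab, map_add, map_smul, map_smul, hu, hv, smul_eq_mul, smul_eq_mul]
      rfl
    have hsy : e'.symm (fY ⟨(a, b), hab⟩) = ωn • u + π • v := hesymm _ _ hval
    simp only [LinearMap.mem_ker, hg, LinearMap.comp_apply, LinearEquiv.coe_coe]
    rw [hsy, Submodule.mkQ_apply, Submodule.Quotient.mk_eq_zero]
    exact Submodule.add_mem _ (Submodule.smul_mem_smul hωnI trivial)
      (Submodule.smul_mem_smul hπI trivial)
  set gbar := Submodule.liftQ K₀ g hK₀ with hgbar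
  have hrg : LinearMap.range g = LinearMap.range gbar := by
    conv_lhs => rw [← Submodule.liftQ_mkQ K₀ g hK₀]
    rw [LinearMap.range_comp, Submodule.range_mkQ, Submodule.map_top]
  -- K ⧸ K₀ is finite of cardinality at most mM * mM
  set μ : K →ₗ[PowerSeries ℤ_[p]] (PowerSeries ℤ_[p] ⧸ Y) × (PowerSeries ℤ_[p] ⧸ Y) :=
    (Y.mkQ.prodMap Y.mkQ).comp K.subtype with hμ
  have hkerμ : LinearMap.ker μ = K₀ := by
    rw [hμ, LinearMap.ker_comp, LinearMap.ker_prodMap, Submodule.ker_mkQ, hK₀d]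
  have hμinj : Function.Injective (Submodule.liftQ K₀ μ hkerμ.ge) := by
    rw [← LinearMap.ker_eq_bot]
    exact Submodule.ker_liftQ_eq_bot K₀ μ hkerμ.ge hkerμ.le
  haveI hKK₀fin : Finite (K ⧸ K₀) := Finite.of_injective _ hμinj
  have hcard3 : Nat.card (K ⧸ K₀) ≤ mM * mM := by
    calc Nat.card (K ⧸ K₀)
        ≤ Nat.card ((PowerSeries ℤ_[p] ⧸ Y) × (PowerSeries ℤ_[p] ⧸ Y)) :=
          Nat.card_le_card_of_injective _ hμinj
    _ = mM * mM := by rw [Nat.card_prod]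
  haveI hrgbar_fin : Finite (LinearMap.range gbar) :=
    Finite.of_surjective _ gbar.surjective_rangeRestrict
  haveI hrg_fin : Finite (LinearMap.range g) := by rw [hrg]; exact hrgbar_fin
  have hcard_rg : Nat.card (LinearMap.range g) ≤ mM * mM := by
    refine le_trans ?_ hcard3
    rw [hrg]
    exact Nat.card_le_card_of_surjective _ gbar.surjective_rangeRestrict
  -- the kernel of ψ is contained in the range of g
  have hker_sub : (LinearMap.ker ψ : Set (X ⧸ I • (⊤ : Submodule (PowerSeries ℤ_[p]) X)))
      ⊆ (LinearMap.range g : Set _) := by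
    intro z hz
    obtain ⟨x, rfl⟩ := Submodule.Quotient.mk_surjective _ z
    have hZ : ι x ∈ I := by
      have h0 : ψ (Submodule.Quotient.mk x) = 0 := hz
      rw [hψ, Submodule.mapQ_apply] at h0
      exact (Submodule.Quotient.mk_eq_zero _).mp h0
    obtain ⟨a, b, hab⟩ := Ideal.mem_span_pair.mp (hI ▸ hZ)
    have habY : f (a, b) ∈ Y := by
      rw [hfab, show ωn * a + π * b = a * ωn + b * π by ring, hab]
      exact ⟨x, rfl⟩
    refine ⟨⟨(a, b), habY⟩, ?_⟩
    have hval : f (a, b) = ι x := by rw [hfab]; linear_combination hab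
    have hsy : e'.symm (fY ⟨(a, b), habY⟩) = x := hesymm _ _ hval
    simp only [hg, LinearMap.comp_apply, LinearEquiv.coe_coe]
    rw [hsy, Submodule.mkQ_apply]
  haveI hkerψ_fin : Finite (LinearMap.ker ψ) := Finite.Set.subset _ hker_sub
  have hcard_ker : Nat.card (LinearMap.ker ψ) ≤ mM * mM :=
    le_trans (Nat.card_le_card_of_injective (Set.inclusion hker_sub)
      (Set.inclusion_injective hker_sub)) hcard_rg
  -- finiteness of X ⧸ I•⊤
  haveI hq_fin : Finite ((X ⧸ I • (⊤ : Submodule (PowerSeries ℤ_[p]) X)) ⧸ LinearMap.ker ψ) :=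
    Finite.of_equiv _ (ψ.quotKerEquivRange).symm.toEquiv
  haveI hXq_fin : Finite (X ⧸ I • (⊤ : Submodule (PowerSeries ℤ_[p]) X)) :=
    finite_of_finite_quot' (LinearMap.ker ψ) hkerψ_fin hq_fin
  -- finiteness of Λ ⧸ (I ⊔ Y) and its bound
  have hsup_surj : Function.Surjective
      (Submodule.mapQ Y (I ⊔ Y) LinearMap.id (by simpa using le_sup_right)) := by
    intro z
    obtain ⟨y, rfl⟩ := Submodule.Quotient.mk_surjective _ z
    exact ⟨Submodule.Quotient.mk y, by rw [Submodule.mapQ_apply]; rfl⟩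
  haveI hsup_fin : Finite (PowerSeries ℤ_[p] ⧸ (I ⊔ Y)) := Finite.of_surjective _ hsup_surj
  have hcard_sup : Nat.card (PowerSeries ℤ_[p] ⧸ (I ⊔ Y)) ≤ mM :=
    Nat.card_le_card_of_surjective _ hsup_surj
  -- the two counting identities
  have hBeq : Nat.card (X ⧸ I • (⊤ : Submodule (PowerSeries ℤ_[p]) X))
      = Nat.card (LinearMap.range ψ) * Nat.card (LinearMap.ker ψ) := by
    rw [card_quot_mul (LinearMap.ker ψ)]
    congr 1
    exact Nat.card_congr (ψ.quotKerEquivRange).toEquiv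
  have hAeq : Nat.card (PowerSeries ℤ_[p] ⧸ I)
      = Nat.card (PowerSeries ℤ_[p] ⧸ (I ⊔ Y)) * Nat.card (LinearMap.range ψ) := by
    rw [card_quot_mul (LinearMap.range ψ)]
    congr 1
    rw [hrange]
    exact Nat.card_congr (Submodule.quotientQuotientEquivQuotientSup I Y).toEquiv
  -- both correction factors are powers of p
  obtain ⟨s, hs⟩ := exists_card_eq_pow' p (LinearMap.ker ψ)
  obtain ⟨t, ht⟩ := exists_card_eq_pow' p (PowerSeries ℤ_[p] ⧸ (I ⊔ Y))
  have hsle : s ≤ mM * mM := by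
    have h1 : p ^ s ≤ mM * mM := by rw [← hs]; exact hcard_ker
    exact le_of_lt (lt_of_lt_of_le (Nat.lt_pow_self (n := s) hp1) h1)
  have htle : t ≤ mM * mM := by
    have h1 : p ^ t ≤ mM := by rw [← ht]; exact hcard_sup
    have h2 := lt_of_lt_of_le (Nat.lt_pow_self (n := t) hp1) h1
    nlinarith
  refine ⟨(s : ℤ) - t, by omega, ?_⟩
  have key : Nat.card (X ⧸ I • (⊤ : Submodule (PowerSeries ℤ_[p]) X)) * p ^ t
      = Nat.card (PowerSeries ℤ_[p] ⧸ I) * p ^ s := by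
    rw [hBeq, hAeq, hs, ht]
    ring
  have keyQ : (Nat.card (X ⧸ I • (⊤ : Submodule (PowerSeries ℤ_[p]) X)) : ℚ) * (p : ℚ) ^ t
      = (Nat.card (PowerSeries ℤ_[p] ⧸ I) : ℚ) * (p : ℚ) ^ s := by
    exact_mod_cast congrArg (fun x : ℕ => (x : ℚ)) key
  have hp0 : (p : ℚ) ≠ 0 := by positivity
  rw [zpow_sub₀ hp0, zpow_natCast, zpow_natCast, div_mul_eq_mul_div,
    eq_div_iff (pow_ne_zero _ hp0)]
  linear_combination keyQ
end
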